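/- Let p be a positive rational with √p irrational, and let x₁ = a₁ + b₁√p, …, xₙ = aₙ + bₙ√p (n ≥ 2) with all aᵢ, bᵢ ∈ ℚ, all xᵢ > 0, and such that xᵢ/xⱼ ∉ ℚ and xᵢ·xⱼ ∉ ℚ whenever i ≠ j. Suppose aᵢ − bᵢ√p > 0 for all i. If a rectangle of aspect ratio z > 0 admits a diverse tiling by rectangles with aspect ratios x₁, …, xₙ, then z = e + f√p for some rationals e, f with e > 0 and |f|/e < max_{1 ≤ i ≤ n} |bᵢ|/aᵢ. -/

import Mathlib

set_option maxHeartbeats 1000000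
set_option synthInstance.maxHeartbeats 1000000


/-- A tiling of the rectangle `[0,1] × [0,r]` by finitely many closed
axis-parallel rectangles with positive side lengths, covering the rectangle
and having pairwise disjoint interiors. -/
structure RectTiling (r : ℝ) where
  m : ℕ
  px : Fin m → ℝ
  py : Fin m → ℝ
  w : Fin m → ℝ
  h : Fin m → ℝ
  w_pos : ∀ k, 0 < w k
  h_pos : ∀ k, 0 < h k
  cover : (Set.Icc (0:ℝ) 1 ×ˢ Set.Icc (0:ℝ) r) =
      ⋃ k, Set.Icc (px k) (px k + w k) ×ˢ Set.Icc (py k) (py k + h k)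
  disj : ∀ k l, k ≠ l →
      Disjoint ((Set.Ioo (px k) (px k + w k)) ×ˢ (Set.Ioo (py k) (py k + h k)))
               ((Set.Ioo (px l) (px l + w l)) ×ˢ (Set.Ioo (py l) (py l + h l)))

/-- Tile `k` of the tiling `T` has aspect ratio `x` (in one of the two orientations). -/
def RectTiling.ratioOK {r : ℝ} (T : RectTiling r) (k : Fin T.m) (x : ℝ) : Prop :=
  T.h k / T.w k = x ∨ T.w k / T.h k = x

/-- The rectangle of aspect ratio `r` is tileable by rectangles with aspect
ratios among `X`. -/
def Tileable (r : ℝ) {n : ℕ} (X : Fin n → ℝ) : Prop :=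
  ∃ T : RectTiling r, ∀ k, ∃ i, T.ratioOK k (X i)

/-- The rectangle of aspect ratio `r` admits a *diverse* tiling by rectangles
with aspect ratios `X 0, …, X (n-1)`: every tile has some ratio `X i`, and for
every `i` some tile has ratio `X i`. -/
def DiverselyTileable (r : ℝ) {n : ℕ} (X : Fin n → ℝ) : Prop :=
  ∃ T : RectTiling r, (∀ k, ∃ i, T.ratioOK k (X i)) ∧ (∀ i, ∃ k, T.ratioOK k (X i))

namespace DehnAux

lemma ite_mul_ite' (P Q : Prop) [Decidable P] [Decidable Q] [Decidable (P ∧ Q)] (A B : ℝ) :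
    (if P then A else 0) * (if Q then B else 0) = if P ∧ Q then A * B else 0 := by
  by_cases hP : P
  · by_cases hQ : Q
    · rw [if_pos hP, if_pos hQ, if_pos (⟨hP, hQ⟩ : P ∧ Q)]
    · rw [if_pos hP, if_neg hQ, if_neg (fun h : P ∧ Q => hQ h.2), mul_zero]
  · rw [if_neg hP, if_neg (fun h : P ∧ Q => hP h.1), zero_mul]

lemma sl_lt {l : List ℝ} (hl : l.Pairwise (· < ·)) {i j : ℕ} (hij : i < j)
    (hj : j < l.length) : l.getD i 0 < l.getD j 0 := by
  have hi : i < l.length := lt_trans hij hj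
  rw [List.getD_eq_getElem _ _ hi, List.getD_eq_getElem _ _ hj]
  exact List.pairwise_iff_getElem.mp hl i j hi hj hij

lemma sl_le {l : List ℝ} (hl : l.Pairwise (· < ·)) {i j : ℕ} (hij : i ≤ j)
    (hj : j < l.length) : l.getD i 0 ≤ l.getD j 0 := by
  rcases eq_or_lt_of_le hij with h | h
  · subst h; exact le_refl _
  · exact le_of_lt (sl_lt hl h hj)

lemma sl_mem {l : List ℝ} {i : ℕ} (hi : i < l.length) : l.getD i 0 ∈ l := by
  rw [List.getD_eq_getElem _ _ hi]; exact List.getElem_mem hi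

lemma sl_idx {l : List ℝ} {x : ℝ} (hx : x ∈ l) :
    ∃ m, ∃ _ : m < l.length, l.getD m 0 = x := by
  obtain ⟨⟨m, hm⟩, h⟩ := List.mem_iff_get.mp hx
  exact ⟨m, hm, by rw [List.getD_eq_getElem _ _ hm]; simpa using h⟩

/-- no list element lies strictly between consecutive entries -/
lemma sl_between {l : List ℝ} (hl : l.Pairwise (· < ·)) {x : ℝ} (hx : x ∈ l)
    {i : ℕ} (hi : i + 1 < l.length) : x ≤ l.getD i 0 ∨ l.getD (i+1) 0 ≤ x := by
  obtain ⟨m, hm, rfl⟩ := sl_idx hx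
  rcases le_or_gt m i with h | h
  · exact Or.inl (sl_le hl h (lt_trans (Nat.lt_succ_self i) hi))
  · exact Or.inr (sl_le hl h hm)

lemma telescope_sum (f : ℝ → ℝ) (l : List ℝ) (hl : l.Pairwise (· < ·)) {a b : ℝ}
    (ha : a ∈ l) (hb : b ∈ l) (hab : a ≤ b) :
    ∑ i ∈ Finset.range (l.length - 1),
      (if a ≤ l.getD i 0 ∧ l.getD (i+1) 0 ≤ b then f (l.getD (i+1) 0) - f (l.getD i 0) else 0)
      = f b - f a := by
  classical
  obtain ⟨m, hm, hma⟩ := sl_idx ha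
  obtain ⟨m', hm', hmb⟩ := sl_idx hb
  have hmm : m ≤ m' := by
    by_contra h
    push_neg at h
    have := sl_lt hl h hm
    rw [hma, hmb] at this; linarith
  have hcond : ∀ i ∈ Finset.range (l.length - 1),
      (if a ≤ l.getD i 0 ∧ l.getD (i+1) 0 ≤ b then f (l.getD (i+1) 0) - f (l.getD i 0) else 0)
      = (if i ∈ Finset.Ico m m' then f (l.getD (i+1) 0) - f (l.getD i 0) else 0) := by
    intro i hi
    rw [Finset.mem_range] at hi
    have hi1 : i + 1 < l.length := by omega
    have hil : i < l.length := by omega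
    congr 1
    simp only [Finset.mem_Ico, eq_iff_iff]
    constructor
    · rintro ⟨h1, h2⟩
      constructor
      · by_contra h; push_neg at h
        have := sl_lt hl h hm
        rw [hma] at this
        linarith
      · by_contra h; push_neg at h
        have : l.getD m' 0 < l.getD (i+1) 0 := sl_lt hl (by omega) hi1
        rw [hmb] at this; linarith
    · rintro ⟨h1, h2⟩
      constructor
      · rw [← hma]; exact sl_le hl h1 hil
      · rw [← hmb]; exact sl_le hl (by omega) hm'
  rw [Finset.sum_congr rfl hcond, Finset.sum_ite_mem]
  have hsub : Finset.range (l.length - 1) ∩ Finset.Ico m m' = Finset.Ico m m' := by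
    apply Finset.inter_eq_right.mpr
    intro i hi
    rw [Finset.mem_Ico] at hi
    rw [Finset.mem_range]
    omega
  rw [hsub, Finset.sum_Ico_eq_sub _ hmm, Finset.sum_range_sub (fun i => f (l.getD i 0)),
    Finset.sum_range_sub (fun i => f (l.getD i 0)), hma, hmb]
  ring

end DehnAux

open DehnAux in
theorem dehn {r : ℝ} (hr : 0 < r) (T : RectTiling r) (f g : ℝ → ℝ)
    (hf : ∀ x y, f (x + y) = f x + f y) (hg : ∀ x y, g (x + y) = g x + g y) :
    ∑ k, f (T.w k) * g (T.h k) = f 1 * g r := by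
  classical
  have hsub : ∀ k, (Set.Icc (T.px k) (T.px k + T.w k) ×ˢ Set.Icc (T.py k) (T.py k + T.h k))
      ⊆ (Set.Icc (0:ℝ) 1 ×ˢ Set.Icc (0:ℝ) r) := by
    intro k; rw [T.cover]
    exact Set.subset_iUnion
      (fun k => Set.Icc (T.px k) (T.px k + T.w k) ×ˢ Set.Icc (T.py k) (T.py k + T.h k)) k
  have hbounds : ∀ k, 0 ≤ T.px k ∧ T.px k + T.w k ≤ 1 ∧ 0 ≤ T.py k ∧ T.py k + T.h k ≤ r := by
    intro k
    have h1 : ((T.px k, T.py k) : ℝ × ℝ) ∈ _ := Set.mem_prod.mpr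
      ⟨Set.mem_Icc.mpr ⟨le_refl _, le_add_of_nonneg_right (T.w_pos k).le⟩,
       Set.mem_Icc.mpr ⟨le_refl _, le_add_of_nonneg_right (T.h_pos k).le⟩⟩
    have h2 : ((T.px k + T.w k, T.py k + T.h k) : ℝ × ℝ) ∈ _ := Set.mem_prod.mpr
      ⟨Set.mem_Icc.mpr ⟨le_add_of_nonneg_right (T.w_pos k).le, le_refl _⟩,
       Set.mem_Icc.mpr ⟨le_add_of_nonneg_right (T.h_pos k).le, le_refl _⟩⟩
    have h1' := hsub k h1
    have h2' := hsub k h2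
    rw [Set.mem_prod, Set.mem_Icc, Set.mem_Icc] at h1' h2'
    exact ⟨h1'.1.1, h2'.1.2, h1'.2.1, h2'.2.2⟩
  set X : Finset ℝ := {0, 1} ∪ Finset.image T.px Finset.univ ∪
      Finset.image (fun k => T.px k + T.w k) Finset.univ with hX
  set Y : Finset ℝ := {0, r} ∪ Finset.image T.py Finset.univ ∪
      Finset.image (fun k => T.py k + T.h k) Finset.univ with hY
  set xs := X.sort (· ≤ ·) with hxs
  set ys := Y.sort (· ≤ ·) with hys
  have hxss : xs.Pairwise (· < ·) := X.sortedLT_sort.pairwise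
  have hyss : ys.Pairwise (· < ·) := Y.sortedLT_sort.pairwise
  set N := xs.length with hN
  set M := ys.length with hM
  have hmemX : ∀ x, x ∈ X ↔ x ∈ xs := fun x => (Finset.mem_sort _).symm
  have hmemY : ∀ y, y ∈ Y ↔ y ∈ ys := fun y => (Finset.mem_sort _).symm
  have h0X : (0:ℝ) ∈ X := by simp [hX]
  have h1X : (1:ℝ) ∈ X := by simp [hX]
  have h0Y : (0:ℝ) ∈ Y := by simp [hY]
  have hrY : r ∈ Y := by simp [hY]
  have hpxX : ∀ k, T.px k ∈ X := by intro k; simp [hX]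
  have hpwX : ∀ k, T.px k + T.w k ∈ X := by
    intro k; simp only [hX, Finset.mem_union]; right
    exact Finset.mem_image.mpr ⟨k, Finset.mem_univ k, rfl⟩
  have hpyY : ∀ k, T.py k ∈ Y := by intro k; simp [hY]
  have hphY : ∀ k, T.py k + T.h k ∈ Y := by
    intro k; simp only [hY, Finset.mem_union]; right
    exact Finset.mem_image.mpr ⟨k, Finset.mem_univ k, rfl⟩
  have hXrange : ∀ x ∈ X, 0 ≤ x ∧ x ≤ 1 := by
    intro x hx
    simp only [hX, Finset.mem_union, Finset.mem_insert, Finset.mem_singleton,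
      Finset.mem_image] at hx
    rcases hx with ((rfl | rfl) | ⟨k, _, rfl⟩) | ⟨k, _, rfl⟩
    · norm_num
    · norm_num
    · have := hbounds k; have := (T.w_pos k); constructor <;> [exact (hbounds k).1; linarith [(hbounds k).2.1]]
    · have := hbounds k; constructor <;> [linarith [(hbounds k).1, (T.w_pos k)]; exact (hbounds k).2.1]
  have hYrange : ∀ y ∈ Y, 0 ≤ y ∧ y ≤ r := by
    intro y hy
    simp only [hY, Finset.mem_union, Finset.mem_insert, Finset.mem_singleton,
      Finset.mem_image] at hy
    rcases hy with ((rfl | rfl) | ⟨k, _, rfl⟩) | ⟨k, _, rfl⟩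
    · exact ⟨le_refl _, hr.le⟩
    · exact ⟨hr.le, le_refl _⟩
    · constructor <;> [exact (hbounds k).2.2.1; linarith [(hbounds k).2.2.2, T.h_pos k]]
    · constructor <;> [linarith [(hbounds k).2.2.1, T.h_pos k]; exact (hbounds k).2.2.2]
  -- basic index facts
  have h0xs : (0:ℝ) ∈ xs := (hmemX 0).mp h0X
  have h1xs : (1:ℝ) ∈ xs := (hmemX 1).mp h1X
  have h0ys : (0:ℝ) ∈ ys := (hmemY 0).mp h0Y
  have hrys : r ∈ ys := (hmemY r).mp hrY
  have hN2 : 2 ≤ N := by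
    by_contra hc
    push_neg at hc
    interval_cases N
    · exact (List.not_mem_nil (a := (0:ℝ))) (List.length_eq_zero_iff.mp (by omega : xs.length = 0) ▸ h0xs)
    · obtain ⟨m0, hm0, e0⟩ := sl_idx h0xs
      obtain ⟨m1, hm1, e1⟩ := sl_idx h1xs
      have : m0 = m1 := by omega
      rw [this, e1] at e0; norm_num at e0
  have hM2 : 2 ≤ M := by
    by_contra hc
    push_neg at hc
    interval_cases M
    · exact (List.not_mem_nil (a := (0:ℝ))) (List.length_eq_zero_iff.mp (by omega : ys.length = 0) ▸ h0ys)
    · obtain ⟨m0, hm0, e0⟩ := sl_idx h0ys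
      obtain ⟨m1, hm1, e1⟩ := sl_idx hrys
      have : m0 = m1 := by omega
      rw [this, e1] at e0; linarith
  have hξ0 : xs.getD 0 0 = 0 := by
    obtain ⟨m0, hm0, e0⟩ := sl_idx h0xs
    have hmem := sl_mem (show (0:ℕ) < xs.length by omega)
    have hge : 0 ≤ xs.getD 0 0 := (hXrange _ ((hmemX _).mpr hmem)).1
    have hle : xs.getD 0 0 ≤ xs.getD m0 0 := sl_le hxss (Nat.zero_le _) hm0
    rw [e0] at hle
    exact le_antisymm hle hge
  have hξlast : xs.getD (N - 1) 0 = 1 := by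
    obtain ⟨m1, hm1, e1⟩ := sl_idx h1xs
    have hmem := sl_mem (show N - 1 < xs.length by omega)
    have hle : xs.getD (N-1) 0 ≤ 1 := (hXrange _ ((hmemX _).mpr hmem)).2
    have hge : xs.getD m1 0 ≤ xs.getD (N-1) 0 := sl_le hxss (by omega) (by omega)
    rw [e1] at hge
    exact le_antisymm hle hge
  have hη0 : ys.getD 0 0 = 0 := by
    obtain ⟨m0, hm0, e0⟩ := sl_idx h0ys
    have hmem := sl_mem (show (0:ℕ) < ys.length by omega)
    have hge : 0 ≤ ys.getD 0 0 := (hYrange _ ((hmemY _).mpr hmem)).1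
    have hle : ys.getD 0 0 ≤ ys.getD m0 0 := sl_le hyss (Nat.zero_le _) hm0
    rw [e0] at hle
    exact le_antisymm hle hge
  have hηlast : ys.getD (M - 1) 0 = r := by
    obtain ⟨m1, hm1, e1⟩ := sl_idx hrys
    have hmem := sl_mem (show M - 1 < ys.length by omega)
    have hle : ys.getD (M-1) 0 ≤ r := (hYrange _ ((hmemY _).mpr hmem)).2
    have hge : ys.getD m1 0 ≤ ys.getD (M-1) 0 := sl_le hyss (by omega) (by omega)
    rw [e1] at hge
    exact le_antisymm hle hge
  -- per-tile expansion
  have key : ∀ k : Fin T.m, f (T.w k) * g (T.h k) =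
      ∑ i ∈ Finset.range (N-1), ∑ j ∈ Finset.range (M-1),
        (if (T.px k ≤ xs.getD i 0 ∧ xs.getD (i+1) 0 ≤ T.px k + T.w k) ∧
            (T.py k ≤ ys.getD j 0 ∧ ys.getD (j+1) 0 ≤ T.py k + T.h k)
         then (f (xs.getD (i+1) 0) - f (xs.getD i 0)) * (g (ys.getD (j+1) 0) - g (ys.getD j 0)) else 0) := by
    intro k
    have hfw : f (T.w k) = f (T.px k + T.w k) - f (T.px k) := by
      have := hf (T.px k) (T.w k); linarith
    have hgh : g (T.h k) = g (T.py k + T.h k) - g (T.py k) := by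
      have := hg (T.py k) (T.h k); linarith
    rw [hfw, hgh,
      ← telescope_sum f xs hxss ((hmemX _).mp (hpxX k)) ((hmemX _).mp (hpwX k))
        (le_add_of_nonneg_right (T.w_pos k).le),
      ← telescope_sum g ys hyss ((hmemY _).mp (hpyY k)) ((hmemY _).mp (hphY k))
        (le_add_of_nonneg_right (T.h_pos k).le),
      Finset.sum_mul_sum]
    refine Finset.sum_congr rfl fun i _ => Finset.sum_congr rfl fun j _ => ?_
    exact ite_mul_ite' _ _ _ _
  -- unique tile through each cell
  have cell : ∀ i ∈ Finset.range (N-1), ∀ j ∈ Finset.range (M-1),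
      ∃! k : Fin T.m, (T.px k ≤ xs.getD i 0 ∧ xs.getD (i+1) 0 ≤ T.px k + T.w k) ∧
        (T.py k ≤ ys.getD j 0 ∧ ys.getD (j+1) 0 ≤ T.py k + T.h k) := by
    intro i hi j hj
    rw [Finset.mem_range] at hi hj
    have hi1 : i + 1 < N := by omega
    have hj1 : j + 1 < M := by omega
    have hξi : xs.getD i 0 < xs.getD (i+1) 0 := sl_lt hxss (Nat.lt_succ_self i) hi1
    have hηj : ys.getD j 0 < ys.getD (j+1) 0 := sl_lt hyss (Nat.lt_succ_self j) hj1
    have hξi0 : 0 ≤ xs.getD i 0 := by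
      have h := sl_le hxss (Nat.zero_le i) (show i < xs.length by omega)
      rw [hξ0] at h; exact h
    have hξi1 : xs.getD (i+1) 0 ≤ 1 := by
      have h := sl_le hxss (show i + 1 ≤ N - 1 by omega) (show N - 1 < xs.length by omega)
      rw [hξlast] at h; exact h
    have hηj0 : 0 ≤ ys.getD j 0 := by
      have h := sl_le hyss (Nat.zero_le j) (show j < ys.length by omega)
      rw [hη0] at h; exact h
    have hηj1 : ys.getD (j+1) 0 ≤ r := by
      have h := sl_le hyss (show j + 1 ≤ M - 1 by omega) (show M - 1 < ys.length by omega)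
      rw [hηlast] at h; exact h
    set mx := (xs.getD i 0 + xs.getD (i+1) 0)/2 with hmx
    set my := (ys.getD j 0 + ys.getD (j+1) 0)/2 with hmy
    have hmx1 : xs.getD i 0 < mx := by rw [hmx]; linarith
    have hmx2 : mx < xs.getD (i+1) 0 := by rw [hmx]; linarith
    have hmy1 : ys.getD j 0 < my := by rw [hmy]; linarith
    have hmy2 : my < ys.getD (j+1) 0 := by rw [hmy]; linarith
    have hmem : ((mx, my) : ℝ × ℝ) ∈ (Set.Icc (0:ℝ) 1 ×ˢ Set.Icc (0:ℝ) r) :=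
      Set.mem_prod.mpr ⟨Set.mem_Icc.mpr ⟨by linarith, by linarith⟩,
        Set.mem_Icc.mpr ⟨by linarith, by linarith⟩⟩
    rw [T.cover] at hmem
    obtain ⟨k0, hk0⟩ := Set.mem_iUnion.mp hmem
    rw [Set.mem_prod, Set.mem_Icc, Set.mem_Icc] at hk0
    have hcond : ∀ k : Fin T.m,
        (T.px k ≤ mx ∧ mx ≤ T.px k + T.w k ∧ T.py k ≤ my ∧ my ≤ T.py k + T.h k) →
        (T.px k ≤ xs.getD i 0 ∧ xs.getD (i+1) 0 ≤ T.px k + T.w k) ∧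
        (T.py k ≤ ys.getD j 0 ∧ ys.getD (j+1) 0 ≤ T.py k + T.h k) := by
      intro k hk
      refine ⟨⟨?_, ?_⟩, ?_, ?_⟩
      · rcases sl_between hxss ((hmemX _).mp (hpxX k)) hi1 with h | h
        · exact h
        · linarith [hk.1]
      · rcases sl_between hxss ((hmemX _).mp (hpwX k)) hi1 with h | h
        · linarith [hk.2.1]
        · exact h
      · rcases sl_between hyss ((hmemY _).mp (hpyY k)) hj1 with h | h
        · exact h
        · linarith [hk.2.2.1]
      · rcases sl_between hyss ((hmemY _).mp (hphY k)) hj1 with h | h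
        · linarith [hk.2.2.2]
        · exact h
    refine ⟨k0, hcond k0 ⟨hk0.1.1, hk0.1.2, hk0.2.1, hk0.2.2⟩, ?_⟩
    intro k' hk'
    by_contra hne
    have hdis := T.disj k' k0 hne
    obtain ⟨hc0, hc0'⟩ := hcond k0 ⟨hk0.1.1, hk0.1.2, hk0.2.1, hk0.2.2⟩
    have hmem1 : ((mx, my) : ℝ × ℝ) ∈
        (Set.Ioo (T.px k') (T.px k' + T.w k') ×ˢ Set.Ioo (T.py k') (T.py k' + T.h k')) :=
      Set.mem_prod.mpr ⟨Set.mem_Ioo.mpr ⟨by linarith [hk'.1.1], by linarith [hk'.1.2]⟩,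
        Set.mem_Ioo.mpr ⟨by linarith [hk'.2.1], by linarith [hk'.2.2]⟩⟩
    have hmem0 : ((mx, my) : ℝ × ℝ) ∈
        (Set.Ioo (T.px k0) (T.px k0 + T.w k0) ×ˢ Set.Ioo (T.py k0) (T.py k0 + T.h k0)) :=
      Set.mem_prod.mpr ⟨Set.mem_Ioo.mpr ⟨by linarith [hc0.1], by linarith [hc0.2]⟩,
        Set.mem_Ioo.mpr ⟨by linarith [hc0'.1], by linarith [hc0'.2]⟩⟩
    exact Set.disjoint_left.mp hdis hmem1 hmem0
  -- put it together
  calc ∑ k, f (T.w k) * g (T.h k)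
      = ∑ k, ∑ i ∈ Finset.range (N-1), ∑ j ∈ Finset.range (M-1),
        (if (T.px k ≤ xs.getD i 0 ∧ xs.getD (i+1) 0 ≤ T.px k + T.w k) ∧
            (T.py k ≤ ys.getD j 0 ∧ ys.getD (j+1) 0 ≤ T.py k + T.h k)
         then (f (xs.getD (i+1) 0) - f (xs.getD i 0)) * (g (ys.getD (j+1) 0) - g (ys.getD j 0)) else 0) :=
        Finset.sum_congr rfl fun k _ => key k
    _ = ∑ i ∈ Finset.range (N-1), ∑ j ∈ Finset.range (M-1), ∑ k,
        (if (T.px k ≤ xs.getD i 0 ∧ xs.getD (i+1) 0 ≤ T.px k + T.w k) ∧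
            (T.py k ≤ ys.getD j 0 ∧ ys.getD (j+1) 0 ≤ T.py k + T.h k)
         then (f (xs.getD (i+1) 0) - f (xs.getD i 0)) * (g (ys.getD (j+1) 0) - g (ys.getD j 0)) else 0) := by
        rw [Finset.sum_comm]
        exact Finset.sum_congr rfl fun i _ => Finset.sum_comm
    _ = ∑ i ∈ Finset.range (N-1), ∑ j ∈ Finset.range (M-1),
        (f (xs.getD (i+1) 0) - f (xs.getD i 0)) * (g (ys.getD (j+1) 0) - g (ys.getD j 0)) := by
        refine Finset.sum_congr rfl fun i hi => Finset.sum_congr rfl fun j hj => ?_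
        obtain ⟨k0, hk0, huniq⟩ := cell i hi j hj
        rw [Finset.sum_eq_single_of_mem k0 (Finset.mem_univ k0)]
        · rw [if_pos hk0]
        · intro k _ hkne
          rw [if_neg (fun hc => hkne (huniq k hc))]
    _ = (∑ i ∈ Finset.range (N-1), (f (xs.getD (i+1) 0) - f (xs.getD i 0))) *
        (∑ j ∈ Finset.range (M-1), (g (ys.getD (j+1) 0) - g (ys.getD j 0))) := (Finset.sum_mul_sum _ _ _ _).symm
    _ = f 1 * g r := by
        have hf0 : f 0 = 0 := by have h := hf 0 0; rw [add_zero] at h; linarith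
        have hg0 : g 0 = 0 := by have h := hg 0 0; rw [add_zero] at h; linarith
        rw [Finset.sum_range_sub (fun i => f (xs.getD i 0)), Finset.sum_range_sub (fun j => g (ys.getD j 0)),
          hξ0, hξlast, hη0, hηlast, hf0, hg0, sub_zero, sub_zero]

namespace SqrtField

variable (p : ℚ)

lemma coords_unique (hirr : Irrational (Real.sqrt p)) {a b c d : ℚ}
    (h : (a:ℝ) + b * Real.sqrt p = c + d * Real.sqrt p) : a = c ∧ b = d := by
  by_cases hbd : b = d
  · subst hbd
    have : (a:ℝ) = c := by linarith
    exact ⟨by exact_mod_cast this, rfl⟩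
  · exfalso
    have hne : ((b:ℝ) - d) ≠ 0 := by
      intro hc
      apply hbd
      have : (b:ℝ) = d := by linarith
      exact_mod_cast this
    have : Real.sqrt p = ((c - a) / (b - d) : ℚ) := by
      push_cast
      field_simp
      linarith
    exact hirr ⟨_, this.symm⟩

lemma sqp_sq (hp : 0 < p) : Real.sqrt p * Real.sqrt p = (p : ℝ) :=
  Real.mul_self_sqrt (by positivity)

/-- the subfield ℚ(√p) of ℝ -/
noncomputable def K (hp : 0 < p) (hirr : Irrational (Real.sqrt p)) : Subfield ℝ where
  carrier := {x | ∃ a b : ℚ, x = (a:ℝ) + b * Real.sqrt p}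
  mul_mem' := by
    rintro x y ⟨a, b, rfl⟩ ⟨c, d, rfl⟩
    refine ⟨a*c + p*b*d, a*d + b*c, ?_⟩
    have h := sqp_sq p hp
    push_cast
    linear_combination ((b:ℝ) * (d:ℝ)) * h
  one_mem' := ⟨1, 0, by norm_num⟩
  add_mem' := by
    rintro x y ⟨a, b, rfl⟩ ⟨c, d, rfl⟩
    exact ⟨a + c, b + d, by push_cast; ring⟩
  zero_mem' := ⟨0, 0, by norm_num⟩
  neg_mem' := by
    rintro x ⟨a, b, rfl⟩
    exact ⟨-a, -b, by push_cast; ring⟩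
  inv_mem' := by
    rintro x ⟨a, b, rfl⟩
    by_cases hx : (a:ℝ) + b * Real.sqrt p = 0
    · rw [hx]
      exact ⟨0, 0, by norm_num⟩
    · have hab : a^2 - p*b^2 ≠ 0 := by
        intro hc
        by_cases hb : b = 0
        · subst hb
          have ha : a = 0 := by nlinarith
          rw [ha] at hx
          simp at hx
        · have hsq : ((a/b : ℚ) : ℝ)^2 = (p : ℝ) := by
            push_cast
            field_simp
            have : a^2 = p * b^2 := by linarith
            exact_mod_cast (show a^2 = b^2 * p by linarith)
          have : Real.sqrt p = |((a/b : ℚ) : ℝ)| := by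
            rw [← hsq, Real.sqrt_sq_eq_abs]
          rcases abs_cases ((a/b : ℚ) : ℝ) with ⟨he, _⟩ | ⟨he, _⟩
          · exact hirr ⟨a/b, by rw [this, he]⟩
          · exact hirr ⟨-(a/b), by rw [this, he]; push_cast; ring⟩
      refine ⟨a / (a^2 - p*b^2), -b / (a^2 - p*b^2), ?_⟩
      have h := sqp_sq p hp
      have habR : ((a:ℝ)^2 - p*b^2) ≠ 0 := by
        intro hc; apply hab
        have : ((a^2 - p*b^2 : ℚ) : ℝ) = 0 := by push_cast; linarith
        exact_mod_cast this
      have key : ((a:ℝ) + b * Real.sqrt p) * ((a:ℝ) - b * Real.sqrt p) = ((a:ℝ)^2 - p*b^2) := by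
        linear_combination (-(b:ℝ)^2) * h
      have key2 : ((a:ℝ) + b * Real.sqrt p) * (((a:ℝ) - b * Real.sqrt p) / ((a:ℝ)^2 - p*b^2)) = 1 := by
        rw [mul_div_assoc', key, div_self habR]
      rw [inv_eq_of_mul_eq_one_right key2]
      push_cast
      ring

variable (hp : 0 < p) (hirr : Irrational (Real.sqrt p))

lemma mem_K {x : ℝ} : x ∈ K p hp hirr ↔ ∃ a b : ℚ, x = (a:ℝ) + b * Real.sqrt p :=
  Iff.rfl

/-- coordinates of an element of ℚ(√p) -/
noncomputable def co (x : K p hp hirr) : ℚ × ℚ :=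
  ⟨(x.2).choose, (x.2).choose_spec.choose⟩

lemma co_spec (x : K p hp hirr) :
    (x : ℝ) = ((co p hp hirr x).1 : ℝ) + ((co p hp hirr x).2 : ℝ) * Real.sqrt p :=
  (x.2).choose_spec.choose_spec

lemma co_unique {x : K p hp hirr} {q r : ℚ}
    (h : (x : ℝ) = (q:ℝ) + r * Real.sqrt p) : co p hp hirr x = (q, r) := by
  have h2 := co_spec p hp hirr x
  rw [h] at h2
  obtain ⟨h3, h4⟩ := coords_unique p hirr h2.symm
  rw [Prod.ext_iff]
  exact ⟨h3, h4⟩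

lemma co_add (x y : K p hp hirr) :
    co p hp hirr (x + y) = co p hp hirr x + co p hp hirr y := by
  apply co_unique
  push_cast [co_spec p hp hirr x, co_spec p hp hirr y]
  ring

lemma co_one : co p hp hirr 1 = (1, 0) := by
  apply co_unique; norm_num

lemma co_eq_zero {x : K p hp hirr} (h : co p hp hirr x = (0, 0)) : x = 0 := by
  have h2 := co_spec p hp hirr x
  rw [h] at h2
  ext
  simpa using h2

/-- multiplication by an explicit element a + b√p, in coordinates -/
lemma co_mul (a b : ℚ) (hab : ((a:ℝ) + b * Real.sqrt p) ∈ K p hp hirr) (y : K p hp hirr) :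
    co p hp hirr (⟨_, hab⟩ * y) =
      (a * (co p hp hirr y).1 + p * b * (co p hp hirr y).2,
       b * (co p hp hirr y).1 + a * (co p hp hirr y).2) := by
  apply co_unique
  have h := sqp_sq p hp
  have hy := co_spec p hp hirr y
  show ((a:ℝ) + b * Real.sqrt p) * (y:ℝ) = _
  rw [hy]
  push_cast
  linear_combination ((b:ℝ) * ((co p hp hirr y).2 : ℝ)) * h

/-- existence of a K-linear functional with prescribed values -/
lemma exists_phi (Kf : Subfield ℝ) {u : ℝ} (hu : u ∉ Kf) (c : Kf) :
    ∃ φ : ℝ →ₗ[Kf] Kf, φ 1 = 1 ∧ φ u = c := by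
  classical
  have hli : LinearIndependent Kf ![(1:ℝ), u] := by
    rw [LinearIndependent.pair_iff]
    intro s t hst
    have hst' : (s : ℝ) * 1 + (t : ℝ) * u = 0 := hst
    by_cases ht : t = 0
    · refine ⟨?_, ht⟩
      rw [ht] at hst'
      push_cast at hst'
      have : (s : ℝ) = 0 := by simpa using hst'
      exact_mod_cast Subtype.ext this
    · exfalso
      apply hu
      have htR : (t : ℝ) ≠ 0 := by
        intro hc; exact ht (Subtype.ext hc)
      have : u = ((-s/t : Kf) : ℝ) := by
        push_cast
        field_simp
        linarith [hst']
      rw [this]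
      exact ((-s/t : Kf)).2
  have hs : LinearIndepOn Kf id (Set.range ![(1:ℝ), u]) :=
    hli.linearIndepOn_id
  have h1mem : (1:ℝ) ∈ hs.extend (Set.subset_univ _) :=
    hs.subset_extend _ ⟨0, rfl⟩
  have humem : u ∈ hs.extend (Set.subset_univ _) :=
    hs.subset_extend _ ⟨1, rfl⟩
  have h1u : (1:ℝ) ≠ u := by
    intro hc; exact hu (hc ▸ Subfield.one_mem Kf)
  refine ⟨(Module.Basis.extend hs).constr ℕ
    (fun i => if (i : ℝ) = u then c else if (i : ℝ) = 1 then 1 else 0), ?_, ?_⟩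
  · have h := Module.Basis.constr_basis (Module.Basis.extend hs) ℕ
      (fun i => if (i : ℝ) = u then c else if (i : ℝ) = 1 then 1 else 0) ⟨1, h1mem⟩
    rw [Module.Basis.extend_apply_self] at h
    rw [h]
    rw [if_neg h1u]
    simp
  · have h := Module.Basis.constr_basis (Module.Basis.extend hs) ℕ
      (fun i => if (i : ℝ) = u then c else if (i : ℝ) = 1 then 1 else 0) ⟨u, humem⟩
    rw [Module.Basis.extend_apply_self] at h
    rw [h]
    simp

lemma exists_phi' (Kf : Subfield ℝ) : ∃ φ : ℝ →ₗ[Kf] Kf, φ 1 = 1 := by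
  classical
  have hli : LinearIndepOn Kf id ({(1:ℝ)} : Set ℝ) := by
    apply (linearIndepOn_singleton_iff _).mpr
    exact one_ne_zero
  have h1mem : (1:ℝ) ∈ hli.extend (Set.subset_univ _) :=
    hli.subset_extend _ rfl
  refine ⟨(Module.Basis.extend hli).constr ℕ
    (fun i => if (i : ℝ) = 1 then (1 : Kf) else 0), ?_⟩
  have h := Module.Basis.constr_basis (Module.Basis.extend hli) ℕ
    (fun i => if (i : ℝ) = 1 then (1 : Kf) else 0) ⟨1, h1mem⟩
  rw [Module.Basis.extend_apply_self] at h
  simpa using h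

end SqrtField

namespace QuadAux

lemma quad_nonneg (c1 c2 c3 A B : ℝ) (h1 : 0 ≤ c1) (h3 : 0 ≤ c3)
    (hd : c2^2 ≤ 4*c1*c3) : 0 ≤ c1 * A^2 + c2 * A * B + c3 * B^2 := by
  rcases eq_or_lt_of_le h1 with h | h
  · have hc2 : c2 = 0 := by nlinarith [sq_nonneg c2]
    rw [← h, hc2]
    have := mul_nonneg h3 (sq_nonneg B)
    nlinarith
  · nlinarith [sq_nonneg (2*c1*A + c2*B), mul_nonneg (sub_nonneg.mpr hd) (sq_nonneg B)]

lemma quad_pos (c1 c2 c3 A B : ℝ) (h1 : 0 < c1) (hd : c2^2 < 4*c1*c3)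
    (hAB : ¬(A = 0 ∧ B = 0)) : 0 < c1 * A^2 + c2 * A * B + c3 * B^2 := by
  by_cases hB : B = 0
  · have hA : A ≠ 0 := fun h => hAB ⟨h, hB⟩
    have : 0 < A^2 := by positivity
    rw [hB]
    nlinarith
  · have : 0 < B^2 := by positivity
    nlinarith [sq_nonneg (2*c1*A + c2*B), mul_pos (sub_pos.mpr hd) this]

end QuadAux

open QuadAux in
/-- Master inequality: the Dehn-type invariant of a tiling is a sum of
quadratic forms, one for each tile. -/
lemma master_bound {r : ℝ} (hr : 0 < r) (T : RectTiling r) {n : ℕ} (X : Fin n → ℝ)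
    (hTall : ∀ k, ∃ i, T.ratioOK k (X i))
    (G1 G2 : ℝ → ℝ)
    (h1add : ∀ x y, G1 (x + y) = G1 x + G1 y) (h2add : ∀ x y, G2 (x + y) = G2 x + G2 y)
    (h1one : G1 1 = 1) (h2one : G2 1 = 0)
    (ca cb : Fin n → ℚ) (pq μ P : ℚ)
    (hs1 : ∀ i u, G1 (X i * u) = (ca i : ℝ) * G1 u + (pq : ℝ) * (cb i : ℝ) * G2 u)
    (hs2 : ∀ i u, G2 (X i * u) = (cb i : ℝ) * G1 u + (ca i : ℝ) * G2 u)
    (hc1 : ∀ i, 0 ≤ ca i + μ * cb i)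
    (hc3 : ∀ i, 0 ≤ μ * pq * cb i + P * ca i)
    (hdisc : ∀ i, (pq * cb i + 2*μ*ca i + P*cb i)^2 ≤ 4*(ca i + μ*cb i)*(μ*pq*cb i + P*ca i)) :
    (0 ≤ G1 r + (μ:ℝ) * G2 r) ∧
    ∀ (k₁ : Fin T.m) (j : Fin n), T.ratioOK k₁ (X j) →
      ¬(G1 (T.w k₁) = 0 ∧ G2 (T.w k₁) = 0) →
      0 < ca j + μ * cb j →
      (pq * cb j + 2*μ*ca j + P*cb j)^2 < 4*(ca j + μ*cb j)*(μ*pq*cb j + P*ca j) →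
      0 < G1 r + (μ:ℝ) * G2 r := by
  classical
  have D11 := dehn hr T G1 G1 h1add h1add
  have D12 := dehn hr T G1 G2 h1add h2add
  have D21 := dehn hr T G2 G1 h2add h1add
  have D22 := dehn hr T G2 G2 h2add h2add
  have hsum : ∑ k : Fin T.m,
      (G1 (T.w k) * G1 (T.h k)
        + ((μ:ℝ) * (G1 (T.w k) * G2 (T.h k)) + ((μ:ℝ) * (G2 (T.w k) * G1 (T.h k))
        + (P:ℝ) * (G2 (T.w k) * G2 (T.h k)))))
      = G1 r + (μ:ℝ) * G2 r := by
    rw [Finset.sum_add_distrib, Finset.sum_add_distrib, Finset.sum_add_distrib,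
      ← Finset.mul_sum, ← Finset.mul_sum, ← Finset.mul_sum,
      D11, D12, D21, D22, h1one, h2one]
    ring
  -- the quadratic form of a tile with ratio X i, in terms of (A, B)
  have hform : ∀ (i : Fin n) (A B : ℝ),
      ((ca i:ℝ) * A + (pq:ℝ) * (cb i:ℝ) * B) * A
        + ((μ:ℝ) * (((ca i:ℝ) * A + (pq:ℝ) * (cb i:ℝ) * B) * B)
          + ((μ:ℝ) * (((cb i:ℝ) * A + (ca i:ℝ) * B) * A)
          + (P:ℝ) * (((cb i:ℝ) * A + (ca i:ℝ) * B) * B)))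
      = ((ca i + μ * cb i : ℚ):ℝ) * A^2
        + ((pq * cb i + 2*μ*ca i + P*cb i : ℚ):ℝ) * A * B
        + ((μ*pq*cb i + P*ca i : ℚ):ℝ) * B^2 := by
    intro i A B
    push_cast
    ring
  have tile_bound : ∀ k : Fin T.m, ∀ i : Fin n, T.ratioOK k (X i) →
      ∃ A B : ℝ, (¬(G1 (T.w k) = 0 ∧ G2 (T.w k) = 0) → ¬(A = 0 ∧ B = 0)) ∧
      (G1 (T.w k) * G1 (T.h k)
        + ((μ:ℝ) * (G1 (T.w k) * G2 (T.h k)) + ((μ:ℝ) * (G2 (T.w k) * G1 (T.h k))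
        + (P:ℝ) * (G2 (T.w k) * G2 (T.h k)))))
      = ((ca i + μ * cb i : ℚ):ℝ) * A^2
        + ((pq * cb i + 2*μ*ca i + P*cb i : ℚ):ℝ) * A * B
        + ((μ*pq*cb i + P*ca i : ℚ):ℝ) * B^2 := by
    intro k i hri
    rcases hri with hri | hri
    · -- h = X i * w
      have hh : T.h k = X i * T.w k := (div_eq_iff (ne_of_gt (T.w_pos k))).mp hri
      refine ⟨G1 (T.w k), G2 (T.w k), fun h => h, ?_⟩
      rw [← hform i]
      rw [hh, hs1 i, hs2 i]
      ring
    · -- w = X i * h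
      have hh : T.w k = X i * T.h k := (div_eq_iff (ne_of_gt (T.h_pos k))).mp hri
      refine ⟨G1 (T.h k), G2 (T.h k), ?_, ?_⟩
      · intro hvec hc
        apply hvec
        rw [hh, hs1 i, hs2 i, hc.1, hc.2]
        constructor <;> ring
      · rw [← hform i]
        rw [hh, hs1 i, hs2 i]
        try ring
  have tile_nonneg : ∀ k : Fin T.m,
      0 ≤ (G1 (T.w k) * G1 (T.h k)
        + ((μ:ℝ) * (G1 (T.w k) * G2 (T.h k)) + ((μ:ℝ) * (G2 (T.w k) * G1 (T.h k))
        + (P:ℝ) * (G2 (T.w k) * G2 (T.h k))))) := by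
    intro k
    obtain ⟨i, hri⟩ := hTall k
    obtain ⟨A, B, _, heq⟩ := tile_bound k i hri
    rw [heq]
    apply quad_nonneg
    · exact_mod_cast hc1 i
    · exact_mod_cast hc3 i
    · exact_mod_cast hdisc i
  constructor
  · rw [← hsum]
    exact Finset.sum_nonneg (fun k _ => tile_nonneg k)
  · intro k₁ j hrj hvec hstrict1 hstrict2
    rw [← hsum]
    apply Finset.sum_pos' (fun k _ => tile_nonneg k)
    refine ⟨k₁, Finset.mem_univ _, ?_⟩
    obtain ⟨A, B, hAB, heq⟩ := tile_bound k₁ j hrj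
    rw [heq]
    apply quad_pos
    · exact_mod_cast hstrict1
    · exact_mod_cast hstrict2
    · exact hAB hvec

theorem diverse_tiling_pos_conj_necessary (p : ℚ) (hp : 0 < p)
    (hirr : Irrational (Real.sqrt p))
    (n : ℕ) (hn : 2 ≤ n) (a b : Fin n → ℚ) (X : Fin n → ℝ)
    (hX : ∀ i, X i = (a i : ℝ) + (b i : ℝ) * Real.sqrt p)
    (hXpos : ∀ i, 0 < X i)
    (hdist : ∀ i j, i ≠ j → Irrational (X i / X j) ∧ Irrational (X i * X j))
    (hconj : ∀ i, 0 < (a i : ℝ) - (b i : ℝ) * Real.sqrt p)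
    (z : ℝ) (hz : 0 < z) (htile : DiverselyTileable z X) :
    ∃ e f : ℚ, z = (e : ℝ) + (f : ℝ) * Real.sqrt p ∧ 0 < e ∧
      |f| / e < Finset.univ.sup' ⟨⟨0, by omega⟩, Finset.mem_univ _⟩
        (fun i => |b i| / a i) := by
  classical
  obtain ⟨T, hTall, hTdiv⟩ := htile
  have hppos : (0:ℝ) < (p:ℝ) := by exact_mod_cast hp
  have hsp : Real.sqrt p * Real.sqrt p = (p:ℝ) := SqrtField.sqp_sq p hp
  have hapos : ∀ i, 0 < a i := by
    intro i
    have h1 := hXpos i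
    rw [hX i] at h1
    have h2 := hconj i
    have h3 : (0:ℝ) < (a i:ℝ) := by linarith
    exact_mod_cast h3
  have hconj2 : ∀ i, p * (b i)^2 < (a i)^2 := by
    intro i
    have h1 := hXpos i
    rw [hX i] at h1
    have h2 := hconj i
    have h3 : (p:ℝ) * ((b i):ℝ)^2 < ((a i):ℝ)^2 := by nlinarith
    exact_mod_cast h3
  -- abbreviations for the coordinate functionals
  have hGadd1 : ∀ (φ : ℝ →ₗ[SqrtField.K p hp hirr] SqrtField.K p hp hirr) (x y : ℝ),
      ((SqrtField.co p hp hirr (φ (x + y))).1 : ℝ)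
        = ((SqrtField.co p hp hirr (φ x)).1 : ℝ) + ((SqrtField.co p hp hirr (φ y)).1 : ℝ) := by
    intro φ x y
    rw [map_add, SqrtField.co_add]
    push_cast [Prod.fst_add]
    ring
  have hGadd2 : ∀ (φ : ℝ →ₗ[SqrtField.K p hp hirr] SqrtField.K p hp hirr) (x y : ℝ),
      ((SqrtField.co p hp hirr (φ (x + y))).2 : ℝ)
        = ((SqrtField.co p hp hirr (φ x)).2 : ℝ) + ((SqrtField.co p hp hirr (φ y)).2 : ℝ) := by
    intro φ x y
    rw [map_add, SqrtField.co_add]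
    push_cast [Prod.snd_add]
    ring
  have hone1 : ∀ (φ : ℝ →ₗ[SqrtField.K p hp hirr] SqrtField.K p hp hirr), φ 1 = 1 →
      ((SqrtField.co p hp hirr (φ 1)).1 : ℝ) = 1 := by
    intro φ h
    rw [h, SqrtField.co_one]
    norm_num
  have hone2 : ∀ (φ : ℝ →ₗ[SqrtField.K p hp hirr] SqrtField.K p hp hirr), φ 1 = 1 →
      ((SqrtField.co p hp hirr (φ 1)).2 : ℝ) = 0 := by
    intro φ h
    rw [h, SqrtField.co_one]
    norm_num
  have hs1R : ∀ (φ : ℝ →ₗ[SqrtField.K p hp hirr] SqrtField.K p hp hirr) (i : Fin n) (u : ℝ),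
      ((SqrtField.co p hp hirr (φ (X i * u))).1 : ℝ)
        = (a i : ℝ) * ((SqrtField.co p hp hirr (φ u)).1 : ℝ)
          + (p : ℝ) * (b i : ℝ) * ((SqrtField.co p hp hirr (φ u)).2 : ℝ) := by
    intro φ i u
    have hXmem : ((a i:ℝ) + (b i:ℝ) * Real.sqrt p) ∈ SqrtField.K p hp hirr := ⟨a i, b i, rfl⟩
    have h1 : φ (X i * u) = (⟨_, hXmem⟩ : SqrtField.K p hp hirr) * φ u := by
      have h2 : X i * u = (⟨_, hXmem⟩ : SqrtField.K p hp hirr) • u := by rw [hX i]; rfl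
      rw [h2, map_smul, smul_eq_mul]
    rw [h1, SqrtField.co_mul]
    push_cast
    ring
  have hs2R : ∀ (φ : ℝ →ₗ[SqrtField.K p hp hirr] SqrtField.K p hp hirr) (i : Fin n) (u : ℝ),
      ((SqrtField.co p hp hirr (φ (X i * u))).2 : ℝ)
        = (b i : ℝ) * ((SqrtField.co p hp hirr (φ u)).1 : ℝ)
          + (a i : ℝ) * ((SqrtField.co p hp hirr (φ u)).2 : ℝ) := by
    intro φ i u
    have hXmem : ((a i:ℝ) + (b i:ℝ) * Real.sqrt p) ∈ SqrtField.K p hp hirr := ⟨a i, b i, rfl⟩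
    have h1 : φ (X i * u) = (⟨_, hXmem⟩ : SqrtField.K p hp hirr) * φ u := by
      have h2 : X i * u = (⟨_, hXmem⟩ : SqrtField.K p hp hirr) • u := by rw [hX i]; rfl
      rw [h2, map_smul, smul_eq_mul]
    rw [h1, SqrtField.co_mul]
    push_cast
    ring
  have hφfix : ∀ (φ : ℝ →ₗ[SqrtField.K p hp hirr] SqrtField.K p hp hirr), φ 1 = 1 →
      ∀ (x : ℝ) (hx : x ∈ SqrtField.K p hp hirr), φ x = ⟨x, hx⟩ := by
    intro φ hφ1 x hx
    have h1 : x = (⟨x, hx⟩ : SqrtField.K p hp hirr) • (1:ℝ) := by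
      show x = x * 1
      ring
    conv_lhs => rw [h1]
    rw [map_smul, hφ1, smul_eq_mul, mul_one]
  -- Step 1 : z lies in ℚ(√p)
  have hzK : z ∈ SqrtField.K p hp hirr := by
    by_contra hzKn
    obtain ⟨φ, hφ1, hφz⟩ := SqrtField.exists_phi (SqrtField.K p hp hirr) hzKn (-1)
    have hmb := (master_bound hz T X hTall
      (fun u => ((SqrtField.co p hp hirr (φ u)).1 : ℝ))
      (fun u => ((SqrtField.co p hp hirr (φ u)).2 : ℝ))
      (hGadd1 φ) (hGadd2 φ) (hone1 φ hφ1) (hone2 φ hφ1)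
      a b p 0 p (hs1R φ) (hs2R φ)
      (fun i => by nlinarith [hapos i])
      (fun i => by nlinarith [hapos i, hp])
      (fun i => by nlinarith [hconj2 i, hp, hapos i])).1
    have hco : SqrtField.co p hp hirr (φ z) = (-1, 0) := by
      rw [hφz]
      apply SqrtField.co_unique
      push_cast
      norm_num
    simp only [hco] at hmb
    norm_num at hmb
  have hzK2 : ∃ e f : ℚ, z = (e:ℝ) + (f:ℝ) * Real.sqrt p := hzK
  obtain ⟨e, f, hzef⟩ := hzK2
  -- Step 2 : the maximum of |b i| / a i
  have hNE : (Finset.univ : Finset (Fin n)).Nonempty := ⟨⟨0, by omega⟩, Finset.mem_univ _⟩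
  obtain ⟨i₀, -, hsup⟩ := Finset.exists_mem_eq_sup' hNE (fun i => |b i| / a i)
  have hsup_ge : ∀ i, |b i| / a i ≤ |b i₀| / a i₀ := by
    intro i
    have h := Finset.le_sup' (fun i => |b i| / a i) (Finset.mem_univ i)
    rw [hsup] at h
    exact h
  have hcross : ∀ i, |b i| * a i₀ ≤ |b i₀| * a i := by
    intro i
    have h := hsup_ge i
    rw [div_le_div_iff₀ (hapos i) (hapos i₀)] at h
    exact h
  have hb0 : b i₀ ≠ 0 := by
    intro hb
    have hall : ∀ i, b i = 0 := by
      intro i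
      have h2 := hsup_ge i
      rw [hb] at h2
      simp only [abs_zero, zero_div] at h2
      have h3 : 0 ≤ |b i| / a i := div_nonneg (abs_nonneg _) (hapos i).le
      have h4 : |b i| / a i = 0 := le_antisymm h2 h3
      rw [div_eq_zero_iff] at h4
      rcases h4 with h4 | h4
      · exact abs_eq_zero.mp h4
      · exact absurd h4 (ne_of_gt (hapos i))
    have hne01 : (⟨0, by omega⟩ : Fin n) ≠ ⟨1, by omega⟩ := by
      intro hc
      have := congrArg Fin.val hc
      simp at this
    apply (hdist _ _ hne01).1
    refine ⟨a ⟨0, by omega⟩ / a ⟨1, by omega⟩, ?_⟩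
    rw [hX ⟨0, by omega⟩, hX ⟨1, by omega⟩, hall ⟨0, by omega⟩, hall ⟨1, by omega⟩]
    push_cast
    simp
  have hcross_s : ∀ i, i ≠ i₀ → |b i| * a i₀ < |b i₀| * a i := by
    intro i hne
    rcases lt_or_eq_of_le (hcross i) with h | h
    · exact h
    · exfalso
      have habs : |b i * a i₀| = |b i₀ * a i| := by
        rw [abs_mul, abs_mul, abs_of_pos (hapos i₀), abs_of_pos (hapos i), h]
      have hXine : X i₀ ≠ 0 := ne_of_gt (hXpos i₀)
      rcases abs_eq_abs.mp habs with hh | hh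
      · apply (hdist i i₀ hne).1
        have hhR : (b i:ℝ) * (a i₀:ℝ) = (b i₀:ℝ) * (a i:ℝ) := by exact_mod_cast hh
        have hid : X i * (a i₀:ℝ) = X i₀ * (a i:ℝ) := by
          rw [hX i, hX i₀]
          linear_combination Real.sqrt p * hhR
        refine ⟨a i / a i₀, ?_⟩
        rw [eq_div_iff hXine]
        push_cast
        rw [div_mul_eq_mul_div, div_eq_iff (ne_of_gt (show (0:ℝ) < (a i₀:ℝ) by exact_mod_cast hapos i₀))]
        linear_combination -hid
      · apply (hdist i i₀ hne).2
        have hhR : (b i:ℝ) * (a i₀:ℝ) = -((b i₀:ℝ) * (a i:ℝ)) := by exact_mod_cast hh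
        refine ⟨a i * a i₀ + p * (b i * b i₀), ?_⟩
        rw [hX i, hX i₀]
        push_cast
        linear_combination (-(b i:ℝ) * (b i₀:ℝ)) * hsp - Real.sqrt p * hhR
  set μ₀ : ℚ := a i₀ / |b i₀| with hμ₀def
  have hbabs : 0 < |b i₀| := abs_pos.mpr hb0
  have hμpos : 0 < μ₀ := div_pos (hapos i₀) hbabs
  have hμsq : p < μ₀^2 := by
    rw [hμ₀def, div_pow, lt_div_iff₀ (by positivity)]
    have h1 := hconj2 i₀
    rw [sq_abs]
    nlinarith
  have hkeyμ : ∀ i, μ₀ * |b i| ≤ a i := by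
    intro i
    rw [hμ₀def, div_mul_eq_mul_div, div_le_iff₀ hbabs]
    nlinarith [hcross i]
  -- Step 3 : choose a tile with non-extremal ratio and a good functional
  obtain ⟨j, hj⟩ : ∃ j : Fin n, j ≠ i₀ := by
    by_cases h0 : i₀ = ⟨0, by omega⟩
    · refine ⟨⟨1, by omega⟩, ?_⟩
      rw [h0]
      intro hc
      have := congrArg Fin.val hc
      simp at this
    · exact ⟨⟨0, by omega⟩, fun hc => h0 hc.symm⟩
  have hkeyμs : μ₀ * |b j| < a j := by
    rw [hμ₀def, div_mul_eq_mul_div, div_lt_iff₀ hbabs]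
    nlinarith [hcross_s j hj]
  obtain ⟨k₁, hk₁⟩ := hTdiv j
  obtain ⟨φ, hφ1, hφw⟩ : ∃ φ : ℝ →ₗ[SqrtField.K p hp hirr] SqrtField.K p hp hirr,
      φ 1 = 1 ∧ φ (T.w k₁) ≠ 0 := by
    by_cases hwK : T.w k₁ ∈ SqrtField.K p hp hirr
    · obtain ⟨φ, hφ1⟩ := SqrtField.exists_phi' (SqrtField.K p hp hirr)
      refine ⟨φ, hφ1, ?_⟩
      rw [hφfix φ hφ1 _ hwK]
      intro hc
      have h2 : T.w k₁ = (0:ℝ) := congrArg Subtype.val hc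
      exact (ne_of_gt (T.w_pos k₁)) h2
    · obtain ⟨φ, hφ1, hφw⟩ := SqrtField.exists_phi _ hwK 1
      exact ⟨φ, hφ1, by rw [hφw]; exact one_ne_zero⟩
  have hcoz : SqrtField.co p hp hirr (φ z) = (e, f) := by
    rw [hφfix φ hφ1 z hzK]
    exact SqrtField.co_unique p hp hirr hzef
  have hvec : ¬(((SqrtField.co p hp hirr (φ (T.w k₁))).1 : ℝ) = 0 ∧
      ((SqrtField.co p hp hirr (φ (T.w k₁))).2 : ℝ) = 0) := by
    rintro ⟨h1, h2⟩
    apply hφw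
    apply SqrtField.co_eq_zero p hp hirr
    have h1' : (SqrtField.co p hp hirr (φ (T.w k₁))).1 = 0 := by exact_mod_cast h1
    have h2' : (SqrtField.co p hp hirr (φ (T.w k₁))).2 = 0 := by exact_mod_cast h2
    rw [Prod.ext_iff]
    exact ⟨h1', h2'⟩
  -- Step 4 : the two strict inequalities
  have main : ∀ μ : ℚ, μ^2 = μ₀^2 → |μ| = μ₀ → 0 < (e:ℝ) + (μ:ℝ) * (f:ℝ) := by
    intro μ hμ2 hμabs
    have hc1 : ∀ i, 0 ≤ a i + μ * b i := by
      intro i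
      have h1 : |μ * b i| ≤ a i := by rw [abs_mul, hμabs]; exact hkeyμ i
      have h2 := neg_abs_le (μ * b i)
      linarith
    have hc1s : 0 < a j + μ * b j := by
      have h1 : |μ * b j| < a j := by rw [abs_mul, hμabs]; exact hkeyμs
      have h2 := neg_abs_le (μ * b j)
      linarith
    have hc3 : ∀ i, 0 ≤ μ * p * b i + (2*μ₀^2 - p) * a i := by
      intro i
      have h1 : |μ * p * b i| = p * (μ₀ * |b i|) := by
        rw [abs_mul, abs_mul, hμabs, abs_of_pos hp]
        ring
      have h2 := hkeyμ i
      have h3 := neg_abs_le (μ * p * b i)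
      nlinarith [hapos i, hμsq, hp]
    have hsqle : ∀ i, μ₀^2 * (b i)^2 ≤ (a i)^2 := by
      intro i
      have h1 := hkeyμ i
      have h2 : 0 ≤ μ₀ * |b i| := mul_nonneg hμpos.le (abs_nonneg _)
      nlinarith [sq_abs (b i)]
    have hsqlt : μ₀^2 * (b j)^2 < (a j)^2 := by
      have h1 := hkeyμs
      have h2 : 0 ≤ μ₀ * |b j| := mul_nonneg hμpos.le (abs_nonneg _)
      nlinarith [sq_abs (b j)]
    have h0 : μ^2 - μ₀^2 = 0 := by rw [hμ2]; ring
    have hdisc : ∀ i, (p * b i + 2*μ*a i + (2*μ₀^2 - p)*b i)^2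
        ≤ 4*(a i + μ*b i)*(μ*p*b i + (2*μ₀^2 - p)*a i) := by
      intro i
      have hD : 4*(a i + μ*b i)*(μ*p*b i + (2*μ₀^2 - p)*a i)
          - (p*b i + 2*μ*a i + (2*μ₀^2 - p)*b i)^2
          = 4*(μ₀^2 - p)*((a i)^2 - μ₀^2*(b i)^2)
            + (μ^2 - μ₀^2)*(4*p*(b i)^2 - 4*(a i)^2) := by ring
      rw [h0] at hD
      nlinarith [mul_nonneg (sub_nonneg.mpr hμsq.le) (sub_nonneg.mpr (hsqle i))]
    have hdiscs : (p * b j + 2*μ*a j + (2*μ₀^2 - p)*b j)^2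
        < 4*(a j + μ*b j)*(μ*p*b j + (2*μ₀^2 - p)*a j) := by
      have hD : 4*(a j + μ*b j)*(μ*p*b j + (2*μ₀^2 - p)*a j)
          - (p*b j + 2*μ*a j + (2*μ₀^2 - p)*b j)^2
          = 4*(μ₀^2 - p)*((a j)^2 - μ₀^2*(b j)^2)
            + (μ^2 - μ₀^2)*(4*p*(b j)^2 - 4*(a j)^2) := by ring
      rw [h0] at hD
      nlinarith [mul_pos (sub_pos.mpr hμsq) (sub_pos.mpr hsqlt)]
    have hmb := (master_bound hz T X hTall
      (fun u => ((SqrtField.co p hp hirr (φ u)).1 : ℝ))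
      (fun u => ((SqrtField.co p hp hirr (φ u)).2 : ℝ))
      (hGadd1 φ) (hGadd2 φ) (hone1 φ hφ1) (hone2 φ hφ1)
      a b p μ (2*μ₀^2 - p) (hs1R φ) (hs2R φ)
      hc1 hc3 hdisc).2 k₁ j hk₁ hvec hc1s hdiscs
    simpa [hcoz] using hmb
  have hpos1 := main μ₀ rfl (abs_of_pos hμpos)
  have hpos2 := main (-μ₀) (by ring) (by rw [abs_neg]; exact abs_of_pos hμpos)
  have he1 : 0 < e + μ₀ * f := by exact_mod_cast hpos1
  have he2 : 0 < e + (-μ₀) * f := by exact_mod_cast hpos2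
  have hepos : 0 < e := by nlinarith [he1, he2, hμpos]
  refine ⟨e, f, hzef, hepos, ?_⟩
  have hμf : μ₀ * |f| < e := by
    rcases abs_cases f with ⟨hf, _⟩ | ⟨hf, _⟩
    · rw [hf]; nlinarith [he2]
    · rw [hf]; nlinarith [he1]
  have hineq : |f| / e < |b i₀| / a i₀ := by
    rw [div_lt_div_iff₀ hepos (hapos i₀)]
    have h6 : μ₀ * |b i₀| = a i₀ := by
      rw [hμ₀def]
      field_simp
    nlinarith [mul_lt_mul_of_pos_right hμf hbabs, h6, hbabs]
  calc |f| / e < |b i₀| / a i₀ := hineq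
    _ = Finset.univ.sup' ⟨⟨0, by omega⟩, Finset.mem_univ _⟩ (fun i => |b i| / a i) := hsup.symm
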